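/- Let (X, d) be a finite metric space with |X| ≥ 1, let T be a minimum spanning tree of the complete weighted graph on X with edge weights d, and let ε ≥ 0. Then two points p, q ∈ X are ε-connected (joined by a chain of points of X with consecutive distances at most ε) if and only if every edge on the unique path from p to q in T has weight at most ε. -/

import Mathlib

open SimpleGraph

private lemma split_walk {X : Type*} {T : SimpleGraph X} {p q a b : X}
    (W : T.Walk p q) :
    W.IsPath → s(a, b) ∈ W.edges →
    ((∃ W1 : T.Walk p a, s(a, b) ∉ W1.edges) ∧ (∃ W2 : T.Walk b q, s(a, b) ∉ W2.edges)) ∨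
    ((∃ W1 : T.Walk p b, s(a, b) ∉ W1.edges) ∧ (∃ W2 : T.Walk a q, s(a, b) ∉ W2.edges)) := by
  induction W with
  | nil => intro _ he; simp at he
  | @cons u x v h W ih =>
    intro hW he
    rw [SimpleGraph.Walk.edges_cons, List.mem_cons] at he
    have hW' : W.IsPath := hW.of_cons
    by_cases hcase : s(u, x) = s(a, b)
    · have hnd := hW.edges_nodup
      rw [SimpleGraph.Walk.edges_cons] at hnd
      have hnotin : s(a, b) ∉ W.edges := by
        rw [← hcase]; exact (List.nodup_cons.mp hnd).1
      rw [Sym2.eq_iff] at hcase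
      rcases hcase with ⟨rfl, rfl⟩ | ⟨rfl, rfl⟩
      · exact Or.inl ⟨⟨SimpleGraph.Walk.nil, by simp⟩, ⟨W, hnotin⟩⟩
      · exact Or.inr ⟨⟨SimpleGraph.Walk.nil, by simp⟩, ⟨W, hnotin⟩⟩
    · have he' : s(a, b) ∈ W.edges := he.resolve_left (fun hh => hcase hh.symm)
      have hnc : s(a, b) ∉ (SimpleGraph.Walk.cons h (SimpleGraph.Walk.nil)).edges → True := fun _ => trivial
      rcases ih hW' he' with ⟨⟨W1, h1⟩, hW2⟩ | ⟨⟨W1, h1⟩, hW2⟩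
      · refine Or.inl ⟨⟨SimpleGraph.Walk.cons h W1, ?_⟩, hW2⟩
        rw [SimpleGraph.Walk.edges_cons, List.mem_cons]
        rintro (hh | hh)
        · exact hcase hh.symm
        · exact h1 hh
      · refine Or.inr ⟨⟨SimpleGraph.Walk.cons h W1, ?_⟩, hW2⟩
        rw [SimpleGraph.Walk.edges_cons, List.mem_cons]
        rintro (hh | hh)
        · exact hcase hh.symm
        · exact h1 hh

private lemma walk_chain {X : Type*} [MetricSpace X] {T : SimpleGraph X} {w : Sym2 X → ℝ}
    (hw : ∀ x y : X, w s(x, y) = dist x y) {ε : ℝ} {u v : X} (W : T.Walk u v) :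
    (∀ e ∈ W.edges, w e ≤ ε) → Relation.ReflTransGen (fun x y : X => dist x y ≤ ε) u v := by
  induction W with
  | nil => intro _; exact Relation.ReflTransGen.refl
  | @cons u x v h W ih =>
    intro hb
    refine Relation.ReflTransGen.head ?_ (ih fun e he => hb e (by simp [he]))
    have := hb s(u, x) (by simp)
    rwa [hw] at this

theorem mst_bottleneck {X : Type*} [Fintype X] [DecidableEq X] [MetricSpace X] [Nonempty X]
    (T : SimpleGraph X) (w : Sym2 X → ℝ) (hw : ∀ x y : X, w s(x, y) = dist x y)
    (hT : T.IsTree)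
    (hmin : ∀ T' : SimpleGraph X, T'.IsTree →
      ∑ e ∈ (Set.toFinite T.edgeSet).toFinset, w e ≤
        ∑ e ∈ (Set.toFinite T'.edgeSet).toFinset, w e)
    (ε : ℝ) (hε : 0 ≤ ε) (p q : X) :
    Relation.ReflTransGen (fun x y : X => dist x y ≤ ε) p q ↔
      ∀ (W : T.Walk p q), W.IsPath → ∀ e ∈ W.edges, w e ≤ ε := by
  classical
  constructor
  · intro hchain W hW e he
    by_contra hgt
    push_neg at hgt
    revert he hgt
    induction e using Sym2.ind with
    | _ a b =>
    intro he hgt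
    have hab : T.Adj a b := T.mem_edgeSet.mp (W.edges_subset_edgeSet he)
    have hne : a ≠ b := hab.ne
    set T' := T.deleteEdges {s(a, b)} with hT'def
    have hT'e : T'.edgeSet = T.edgeSet \ {s(a, b)} := T.edgeSet_deleteEdges _
    have htrans : ∀ {u v : X} (W1 : T.Walk u v), s(a, b) ∉ W1.edges → T'.Reachable u v := by
      intro u v W1 h1
      refine ⟨W1.transfer T' ?_⟩
      intro e' he'
      rw [hT'e]
      refine ⟨W1.edges_subset_edgeSet he', ?_⟩
      simp only [Set.mem_singleton_iff]
      rintro rfl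
      exact h1 he'
    have hnr : ¬ T'.Reachable p q := by
      rintro ⟨W0⟩
      have hsub : ∀ e' ∈ W0.edges, e' ∈ T.edgeSet := fun e' he' =>
        (hT'e ▸ W0.edges_subset_edgeSet he').1
      have hpath : ((W0.transfer T hsub).toPath : T.Walk p q) = W := by
        have := hT.IsAcyclic.path_unique (W0.transfer T hsub).toPath ⟨W, hW⟩
        exact congrArg Subtype.val this
      have hmem : s(a, b) ∈ (W0.transfer T hsub).edges := by
        refine SimpleGraph.Walk.edges_toPath_subset _ ?_
        rw [hpath]; exact he
      rw [SimpleGraph.Walk.edges_transfer] at hmem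
      have := W0.edges_subset_edgeSet hmem
      rw [hT'e] at this
      exact this.2 rfl
    have hreach : (T'.Reachable p a ∧ T'.Reachable b q) ∨
        (T'.Reachable p b ∧ T'.Reachable a q) := by
      rcases split_walk W hW he with ⟨⟨W1, h1⟩, ⟨W2, h2⟩⟩ | ⟨⟨W1, h1⟩, ⟨W2, h2⟩⟩
      · exact Or.inl ⟨htrans W1 h1, htrans W2 h2⟩
      · exact Or.inr ⟨htrans W1 h1, htrans W2 h2⟩
    have hA : T'.Reachable p a ∨ T'.Reachable q a := by
      rcases hreach with ⟨h1, _⟩ | ⟨_, h2⟩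
      · exact Or.inl h1
      · exact Or.inr h2.symm
    have hB : T'.Reachable p b ∨ T'.Reachable q b := by
      rcases hreach with ⟨_, h2⟩ | ⟨h1, _⟩
      · exact Or.inr h2.symm
      · exact Or.inl h1
    have step : ∀ {u u' : X}, (T'.Reachable p u ∨ T'.Reachable q u) → T.Adj u u' →
        (T'.Reachable p u' ∨ T'.Reachable q u') := by
      intro u u' hu hadj
      by_cases hc : s(u, u') = s(a, b)
      · rw [Sym2.eq_iff] at hc
        rcases hc with ⟨_, rfl⟩ | ⟨_, rfl⟩
        · exact hB
        · exact hA
      · have hadj' : T'.Adj u u' := by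
          rw [hT'def, SimpleGraph.deleteEdges_adj]
          exact ⟨hadj, by simpa using hc⟩
        rcases hu with h | h
        · exact Or.inl (h.trans hadj'.reachable)
        · exact Or.inr (h.trans hadj'.reachable)
    have cover : ∀ (u v : X), T.Walk u v → (T'.Reachable p u ∨ T'.Reachable q u) →
        (T'.Reachable p v ∨ T'.Reachable q v) := by
      intro u v Wuv
      induction Wuv with
      | nil => exact id
      | cons hadj W ih => intro hu; exact ih (step hu hadj)
    have coverv : ∀ v : X, T'.Reachable p v ∨ T'.Reachable q v := by
      intro v
      obtain ⟨Wv⟩ := hT.isConnected.preconnected p v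
      exact cover p v Wv (Or.inl (SimpleGraph.Reachable.refl p))
    have key : ∀ u v : X, Relation.ReflTransGen (fun x y : X => dist x y ≤ ε) u v →
        T'.Reachable p u → ¬ T'.Reachable p v →
        ∃ x y : X, T'.Reachable p x ∧ ¬ T'.Reachable p y ∧ dist x y ≤ ε := by
      intro u v hrtg
      induction hrtg with
      | refl => intro h1 h2; exact absurd h1 h2
      | @tail b c h1 h2 ih =>
        intro hu hv
        by_cases hbmid : T'.Reachable p b
        · exact ⟨b, c, hbmid, hv, h2⟩
        · exact ih hu hbmid
    obtain ⟨x, y, hx, hy, hxy⟩ :=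
      key p q hchain (SimpleGraph.Reachable.refl p) hnr
    have hxyne : x ≠ y := by rintro rfl; exact hy hx
    have hxy_not_T' : s(x, y) ∉ T'.edgeSet := by
      intro hmem
      exact hy (hx.trans (T'.mem_edgeSet.mp hmem).reachable)
    have hqy : T'.Reachable q y := (coverv y).resolve_left hy
    set T'' := T' ⊔ SimpleGraph.fromEdgeSet {s(x, y)} with hT''def
    have hT'le'' : T' ≤ T'' := le_sup_left
    have hadjxy : T''.Adj x y := by
      rw [hT''def, SimpleGraph.sup_adj]
      exact Or.inr ⟨by simp, hxyne⟩
    have hT''e : T''.edgeSet = insert s(x, y) T'.edgeSet := by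
      rw [hT''def, SimpleGraph.edgeSet_sup, SimpleGraph.edgeSet_fromEdgeSet]
      ext e'
      simp only [Set.mem_union, Set.mem_diff, Set.mem_singleton_iff, Set.mem_insert_iff,
        Set.mem_setOf_eq]
      constructor
      · rintro (h | ⟨rfl, _⟩)
        · exact Or.inr h
        · exact Or.inl rfl
      · rintro (rfl | h)
        · exact Or.inr ⟨rfl, by simp [hxyne]⟩
        · exact Or.inl h
    have hppre : ∀ v2 : X, T''.Reachable p v2 := by
      intro v2
      have hpy : T''.Reachable p y :=
        (SimpleGraph.Reachable.mono hT'le'' hx).trans hadjxy.reachable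
      rcases coverv v2 with h | h
      · exact SimpleGraph.Reachable.mono hT'le'' h
      · exact hpy.trans ((SimpleGraph.Reachable.mono hT'le'' hqy).symm.trans
          (SimpleGraph.Reachable.mono hT'le'' h))
    have hT''conn : T''.Connected := by
      rw [SimpleGraph.connected_iff]
      exact ⟨fun u v => (hppre u).symm.trans (hppre v), ‹Nonempty X›⟩
    have hdel : T'' \ SimpleGraph.fromEdgeSet {s(x, y)} = T' := by
      rw [← SimpleGraph.edgeSet_inj, SimpleGraph.edgeSet_sdiff, SimpleGraph.edgeSet_fromEdgeSet,
        hT''e]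
      ext e'
      simp only [Set.mem_diff, Set.mem_insert_iff, Set.mem_singleton_iff, Set.mem_setOf_eq,
        not_and, not_not]
      constructor
      · rintro ⟨rfl | h, hn⟩
        · exact absurd (hn rfl) (by simp [hxyne])
        · exact h
      · intro h
        refine ⟨Or.inr h, ?_⟩
        rintro rfl
        exact absurd h hxy_not_T'
    have hbridge : ¬ (T'' \ SimpleGraph.fromEdgeSet {s(x, y)}).Reachable x y := by
      rw [hdel]; intro h; exact hy (hx.trans h)
    have hT''ac : T''.IsAcyclic := by
      intro v c hc
      by_cases hmem : s(x, y) ∈ c.edges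
      · have hb : T''.IsBridge s(x, y) := SimpleGraph.isBridge_iff.mpr hbridge
        exact (SimpleGraph.isBridge_iff_adj_and_forall_cycle_notMem hadjxy).mp hb c hc hmem
      · have hsub : ∀ e' ∈ c.edges, e' ∈ T.edgeSet := by
          intro e' he'
          have h1 := c.edges_subset_edgeSet he'
          rw [hT''e] at h1
          rcases Set.mem_insert_iff.mp h1 with rfl | h2
          · exact absurd he' hmem
          · exact (hT'e ▸ h2).1
        exact hT.IsAcyclic (c.transfer T hsub) (hc.transfer hsub)
    have hT''tree : T''.IsTree := ⟨hT''conn, hT''ac⟩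
    have hFmem : s(a, b) ∈ (Set.toFinite T.edgeSet).toFinset := by
      rw [Set.Finite.mem_toFinset]; exact W.edges_subset_edgeSet he
    have hF'' : (Set.toFinite T''.edgeSet).toFinset =
        insert s(x, y) (((Set.toFinite T.edgeSet).toFinset).erase s(a, b)) := by
      ext e'
      rw [Set.Finite.mem_toFinset, hT''e, hT'e]
      simp only [Set.mem_insert_iff, Set.mem_diff, Set.mem_singleton_iff, Finset.mem_insert,
        Finset.mem_erase, Set.Finite.mem_toFinset]
      tauto
    have hnotin : s(x, y) ∉ ((Set.toFinite T.edgeSet).toFinset).erase s(a, b) := by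
      rw [Finset.mem_erase, Set.Finite.mem_toFinset]
      rintro ⟨hne', hmem⟩
      exact hxy_not_T' (by rw [hT'e]; exact ⟨hmem, by simpa using hne'⟩)
    have hsum := hmin T'' hT''tree
    rw [hF'', Finset.sum_insert hnotin, ← Finset.add_sum_erase _ w hFmem] at hsum
    have hle : w s(a, b) ≤ w s(x, y) := by linarith
    rw [hw x y] at hle
    exact absurd hgt (not_lt.mpr (hle.trans hxy))
  · intro h
    obtain ⟨W0⟩ := hT.isConnected.preconnected p q
    exact walk_chain hw (W0.toPath : T.Walk p q) (h _ W0.toPath.property)
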